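/- The action of f on cohomology is given by: f*H = 7H, f*H^2 = 4H^2 + 45Δ, f*Δ = 31Δ, and f*H^3 = 28H^3. -/
import Mathlib


/-
STATEMENT 14: The action of `f` on cohomology is: `f*H = 7H`,
`f*H² = 4H² + 45Δ`, `f*Δ = 31Δ`, `f*H³ = 28H³`.

Here `f*α := π_*(g*α)` for the resolution `π : X̃ → X` (blow-up of the
indeterminacy surface `S`, exceptional divisor `E`) and `g = f ∘ π`.
The context facts are recorded: `g*H = 7π*H - 3E`, the projection formula
and the push-forward identities `π_*1 = 1`, `π_*E = 0`, `π_*E² = -[S]` with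
`[S] = 5(H² - Δ)`, `π_*(π*H·E²) = -(35/12)H³`, `π_*E³ = 27HΔ - 20H³`, and
the Chern class identities for `P` and `g*U_X` coming from the exact
sequences `0 → π*U_X → P → M*(E) → 0` and `0 → g*U_X → P → M^{⊗2}(-2E) → 0`
with `M = O(2H)` (so that `g*Δ = c₂(g*U_X)`, `g*H = -c₁(g*U_X)`).
-/
structure PullbackComputationSetup where
  /-- `H^*(X, ℚ)` -/
  A : Type*
  /-- `H^*(X̃, ℚ)` -/
  B : Type*
  [ringA : CommRing A] [algA : Algebra ℚ A]
  [ringB : CommRing B] [algB : Algebra ℚ B]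
  /-- pull-back `π*` -/
  πpull : A →+* B
  /-- push-forward `π_*` -/
  πpush : B →ₗ[ℚ] A
  /-- pull-back `g*` along `g = f ∘ π` -/
  gpull : A →+* B
  /-- the Plücker class -/
  H : A
  /-- `Δ = c₂(U*_X)` -/
  Δ : A
  /-- the exceptional divisor class -/
  E : B
  /-- `c₁(P)` and `c₂(P)` for the rank-3 bundle `P` of tangent planes -/
  c1P : B
  c2P : B
  /-- projection formula -/
  hproj : ∀ (a : A) (b : B), πpush (πpull a * b) = a * πpush b
  /-- `π` is birational: `π_*1 = 1` -/
  hπ1 : πpush 1 = 1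
  /-- `π_*E = 0` -/
  hE1 : πpush E = 0
  /-- `π_*E² = -[S] = -5(H² - Δ)` -/
  hE2 : πpush (E ^ 2) = -(5 * (H ^ 2 - Δ))
  /-- `π_*(π*H·E²) = -(35/12)H³` -/
  hHE2 : πpush (πpull H * E ^ 2) = -(((35 : ℚ) / 12) • H ^ 3)
  /-- `π_*E³ = 27HΔ - 20H³` -/
  hE3 : πpush (E ^ 3) = 27 * (H * Δ) - 20 * H ^ 3
  /-- `g*H = 7π*H - 3E` -/
  hgH : gpull H = 7 * πpull H - 3 * E
  /-- Whitney for `0 → π*U_X → P → M*(E) → 0`: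
  `c₁(P) = -π*H + (E - 2π*H)` -/
  hc1P : c1P = -(πpull H) + (E - 2 * πpull H)
  /-- and `c₂(P) = π*Δ + (-π*H)·(E - 2π*H) = π*Δ - π*H·E + 2π*H²` -/
  hc2P : c2P = πpull Δ - πpull H * E + 2 * πpull H ^ 2
  /-- Whitney for `0 → g*U_X → P → M^{⊗2}(-2E) → 0`, degree 1 (with
  `c₁(g*U_X) = -g*H`): `-g*H + (4π*H - 2E) = c₁(P)` -/
  hseq2a : -(gpull H) + (4 * πpull H - 2 * E) = c1P
  /-- Whitney in degree 2 (with `c₂(g*U_X) = g*Δ`):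
  `g*Δ + (-g*H)·(4π*H - 2E) = c₂(P)` -/
  hseq2b : gpull Δ + (-(gpull H)) * (4 * πpull H - 2 * E) = c2P

attribute [instance] PullbackComputationSetup.ringA PullbackComputationSetup.algA
  PullbackComputationSetup.ringB PullbackComputationSetup.algB

/-- `f*H = 7H`, `f*H² = 4H² + 45Δ`, `f*Δ = 31Δ`, `f*H³ = 28H³`, where
`f*α = π_*(g*α)`. -/
theorem fstar_on_cohomology (s : PullbackComputationSetup) :
    s.πpush (s.gpull s.H) = 7 * s.H ∧
    s.πpush (s.gpull (s.H ^ 2)) = 4 * s.H ^ 2 + 45 * s.Δ ∧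
    s.πpush (s.gpull s.Δ) = 31 * s.Δ ∧
    s.πpush (s.gpull (s.H ^ 3)) = 28 * s.H ^ 3 := by
  have hpull : ∀ a : s.A, s.πpush (s.πpull a) = a := by
    intro a
    have := s.hproj a 1
    simpa [s.hπ1] using this
  have hπE : ∀ a : s.A, s.πpush (s.πpull a * s.E) = 0 := by
    intro a; rw [s.hproj, s.hE1, mul_zero]
  have hπE2 : ∀ a : s.A, s.πpush (s.πpull a * s.E ^ 2) = a * -(5 * (s.H ^ 2 - s.Δ)) := by
    intro a; rw [s.hproj, s.hE2]
  have k : s.H * -(5 * (s.H ^ 2 - s.Δ)) = -(((35 : ℚ) / 12) • s.H ^ 3) := by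
    rw [← hπE2 s.H]; exact s.hHE2
  refine ⟨?_, ?_, ?_, ?_⟩
  · have e1 : s.gpull s.H = s.πpull (7 * s.H) + s.πpull (-3 : s.A) * s.E := by
      rw [s.hgH, map_mul, map_ofNat, map_neg, map_ofNat]; ring
    rw [e1, map_add, hpull, hπE]
    ring
  · have e2 : s.gpull (s.H ^ 2)
        = s.πpull (49 * s.H ^ 2) + s.πpull (-42 * s.H) * s.E + s.πpull (9 : s.A) * s.E ^ 2 := by
      rw [map_pow, s.hgH]
      simp only [map_mul, map_pow, map_ofNat, map_neg]
      ring
    rw [e2, map_add, map_add, hpull, hπE, hπE2]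
    ring
  · have e3 : s.gpull s.Δ
        = s.πpull (s.Δ + 30 * s.H ^ 2) + s.πpull (-27 * s.H) * s.E + s.πpull (6 : s.A) * s.E ^ 2 := by
      have h2b := s.hseq2b
      rw [s.hc2P, s.hgH] at h2b
      simp only [map_add, map_mul, map_pow, map_ofNat, map_neg]
      linear_combination h2b
    rw [e3, map_add, map_add, hpull, hπE, hπE2]
    ring
  · have k' : s.H * -(5 * (s.H ^ 2 - s.Δ)) = -(algebraMap ℚ s.A ((35:ℚ)/12) * s.H ^ 3) := by
      rw [k, Algebra.smul_def]
    have hc : (12 : s.A) * algebraMap ℚ s.A ((35:ℚ)/12) = 35 := by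
      have h12 : (12 : s.A) = algebraMap ℚ s.A 12 := by rw [map_ofNat]
      rw [h12, ← map_mul]
      norm_num [map_ofNat]
    have h5 : ∀ x : s.A, (5 : s.A) * x = 0 → x = 0 := by
      intro x hx
      have h1 : ((5:ℚ)) • x = 0 := by rw [Algebra.smul_def, map_ofNat]; exact hx
      have h2 := congrArg (fun y => ((1:ℚ)/5) • y) h1
      simpa [smul_smul] using h2
    have hrel : 12 * (s.H * s.Δ) - 5 * s.H ^ 3 = 0 := by
      apply h5
      linear_combination 12 * k' - s.H ^ 3 * hc
    have e4 : s.gpull (s.H ^ 3)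
        = s.πpull (343 * s.H ^ 3) + s.πpull (-441 * s.H ^ 2) * s.E
          + s.πpull (189 * s.H) * s.E ^ 2 + s.πpull (-27 : s.A) * s.E ^ 3 := by
      rw [map_pow, s.hgH]
      simp only [map_mul, map_pow, map_ofNat, map_neg]
      ring
    have hπE3 : s.πpush (s.πpull (-27 : s.A) * s.E ^ 3)
        = (-27 : s.A) * (27 * (s.H * s.Δ) - 20 * s.H ^ 3) := by
      rw [s.hproj, s.hE3]
    rw [e4, map_add, map_add, map_add, hpull, hπE, hπE2, hπE3]
    linear_combination 18 * hrel
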